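/- In the graph G constructed from a Set Cover instance with q > 2 · (|𝒮| + Σ_{S ∈ 𝒮} |S|), let k ≥ 1, let A' ⊆ A be feasible with m' := |{S ∈ 𝒮 | P_S ⊆ A'}|, and let 𝒞 ⊆ 𝒮 be a set cover of U with |𝒞| < m', with choice function σ : U → 𝒞 (u ∈ σ(u)) and corresponding arc set A'' := {(v_u, v^0_{σ(u)}) | u ∈ U} ∪ ⋃_{S ∈ 𝒞} P_S. Then obj_k(A'') < obj_k(A'). -/

import Mathlib

/-- Vertices of the graph constructed from a Set Cover instance with universe `U`,
family of sets indexed by `ι`, and path-length parameter `q`: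
`item u` is `v_u`, `path i j` is `v^j_{S_i}`, and `sink` is `z`. -/
inductive Vtx (U ι : Type) (q : ℕ) : Type where
  | item : U → Vtx U ι q
  | path : ι → Fin (q + 1) → Vtx U ι q
  | sink : Vtx U ι q
  deriving DecidableEq, Fintype

variable {U ι : Type} [Fintype U] [Fintype ι] [DecidableEq U] [DecidableEq ι]

/-- The arcs `A_U = {(v_u, v^0_S) | S ∈ 𝒮, u ∈ S}`. -/
def AU (Sets : ι → Finset U) (q : ℕ) : Finset (Vtx U ι q × Vtx U ι q) :=
  Finset.univ.biUnion fun i => (Sets i).image fun u => (Vtx.item u, Vtx.path i 0)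

/-- The path `P_S = {(v^0_S,v^1_S), …, (v^{q-1}_S,v^q_S), (v^q_S, z)}` for `S = S_i`. -/
def Ppath (U ι : Type) [DecidableEq U] [DecidableEq ι] (q : ℕ) (i : ι) :
    Finset (Vtx U ι q × Vtx U ι q) :=
  ((Finset.univ : Finset (Fin q)).image fun j =>
      ((Vtx.path i j.castSucc : Vtx U ι q), Vtx.path i j.succ)) ∪
    {(Vtx.path i (Fin.last q), Vtx.sink)}

/-- The arc set `A = A_U ∪ ⋃_{S ∈ 𝒮} P_S`. -/
def arcs (Sets : ι → Finset U) (q : ℕ) : Finset (Vtx U ι q × Vtx U ι q) :=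
  AU Sets q ∪ Finset.univ.biUnion (Ppath U ι q)

/-- There is a directed path from `x` to `y` all of whose arcs lie in `A'`. -/
def Reaches {α : Type} (A' : Finset (α × α)) (x y : α) : Prop :=
  Relation.ReflTransGen (fun a b => (a, b) ∈ A') x y

/-- `A' ⊆ A` is feasible if every `v_u` can reach `z` using only arcs of `A'`. -/
def Feasible {q : ℕ} (A' : Finset (Vtx U ι q × Vtx U ι q)) : Prop :=
  ∀ u : U, Reaches A' (Vtx.item u) Vtx.sink

/-- The number of arcs of `B` incident to `v` (in-degree plus out-degree). -/
def deg {α : Type} [DecidableEq α] (B : Finset (α × α)) (v : α) : ℕ :=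
  (B.filter fun a => a.1 = v).card + (B.filter fun a => a.2 = v).card

/-- The linecard objective `obj_k(B) = Σ_v ⌈deg_B(v)/k⌉`. -/
def obj {α : Type} [Fintype α] [DecidableEq α] (k : ℕ) (B : Finset (α × α)) : ℕ :=
  ∑ v : α, deg B v ⌈/⌉ k

open Finset

set_option linter.unusedSectionVars false

section MyAux

lemma myCeilDiv_le_self {d k : ℕ} (hk : 1 ≤ k) : d ⌈/⌉ k ≤ d := by
  rw [Nat.ceilDiv_eq_add_pred_div, Nat.div_le_iff_le_mul_add_pred hk]
  have := Nat.le_mul_of_pos_left d hk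
  omega

lemma myCeilDiv_mono {d d' k : ℕ} (h : d ≤ d') : d ⌈/⌉ k ≤ d' ⌈/⌉ k := by
  rw [Nat.ceilDiv_eq_add_pred_div, Nat.ceilDiv_eq_add_pred_div]
  exact Nat.div_le_div_right (by omega)

lemma my_one_le_ceilDiv {d k : ℕ} (hk : 1 ≤ k) (hd : 1 ≤ d) : 1 ≤ d ⌈/⌉ k := by
  rw [Nat.ceilDiv_eq_add_pred_div, Nat.le_div_iff_mul_le hk]
  omega

def vtxEquiv (U ι : Type) (q : ℕ) : (U ⊕ (ι × Fin (q + 1)) ⊕ Unit) ≃ Vtx U ι q where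
  toFun x := match x with
    | .inl u => .item u
    | .inr (.inl (i, j)) => .path i j
    | .inr (.inr _) => .sink
  invFun v := match v with
    | .item u => .inl u
    | .path i j => .inr (.inl (i, j))
    | .sink => .inr (.inr ())
  left_inv := by rintro (u | ⟨i, j⟩ | ⟨⟩) <;> rfl
  right_inv := by rintro (u | ⟨i, j⟩ | _) <;> rfl

lemma sum_vtx {q : ℕ} (f : Vtx U ι q → ℕ) :
    ∑ v, f v = (∑ u, f (.item u)) + ((∑ i, ∑ j, f (.path i j)) + f .sink) := by
  rw [← (vtxEquiv U ι q).sum_comp f]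
  simp [Fintype.sum_sum_type, Fintype.sum_prod_type, vtxEquiv]

lemma mem_Ppath {q : ℕ} {i : ι} {e : Vtx U ι q × Vtx U ι q} :
    e ∈ Ppath U ι q i ↔ (∃ j : Fin q, e = (Vtx.path i j.castSucc, Vtx.path i j.succ)) ∨
      e = (Vtx.path i (Fin.last q), Vtx.sink) := by
  simp [Ppath, eq_comm]
  exact or_comm

lemma Ppath_fst_inj {q : ℕ} {i : ι} {e1 e2 : Vtx U ι q × Vtx U ι q}
    (h1 : e1 ∈ Ppath U ι q i) (h2 : e2 ∈ Ppath U ι q i) (h : e1.1 = e2.1) : e1 = e2 := by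
  rw [mem_Ppath] at h1 h2
  rcases h1 with ⟨j1, rfl⟩ | rfl <;> rcases h2 with ⟨j2, rfl⟩ | rfl
  · simp only [Vtx.path.injEq] at h
    obtain ⟨-, h⟩ := h
    rw [Fin.castSucc_inj] at h
    subst h; rfl
  · simp only [Vtx.path.injEq] at h
    exact absurd h.2 (Fin.castSucc_lt_last j1).ne
  · simp only [Vtx.path.injEq] at h
    exact absurd h.2.symm (Fin.castSucc_lt_last j2).ne
  · rfl

lemma Ppath_snd_inj {q : ℕ} {i : ι} {e1 e2 : Vtx U ι q × Vtx U ι q}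
    (h1 : e1 ∈ Ppath U ι q i) (h2 : e2 ∈ Ppath U ι q i) (h : e1.2 = e2.2) : e1 = e2 := by
  rw [mem_Ppath] at h1 h2
  rcases h1 with ⟨j1, rfl⟩ | rfl <;> rcases h2 with ⟨j2, rfl⟩ | rfl
  · simp only [Vtx.path.injEq] at h
    obtain ⟨-, h⟩ := h
    rw [Fin.succ_inj] at h
    subst h; rfl
  · simp at h
  · simp at h
  · rfl

lemma filter_fst_subset {α : Type} [DecidableEq α] {B s : Finset (α × α)} {v : α}
    (h : ∀ b, (v, b) ∈ B → (v, b) ∈ s) : (B.filter fun a => a.1 = v) ⊆ s := by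
  intro a ha
  rw [Finset.mem_filter] at ha
  obtain ⟨hB, h1⟩ := ha
  have ha2 : a = (v, a.2) := by rw [← h1]
  rw [ha2] at hB ⊢
  exact h _ hB

lemma filter_snd_subset {α : Type} [DecidableEq α] {B t : Finset (α × α)} {v : α}
    (h : ∀ a, (a, v) ∈ B → (a, v) ∈ t) : (B.filter fun a => a.2 = v) ⊆ t := by
  intro a ha
  rw [Finset.mem_filter] at ha
  obtain ⟨hB, h1⟩ := ha
  have ha2 : a = (a.1, v) := by rw [← h1]
  rw [ha2] at hB ⊢
  exact h _ hB

lemma deg_le_of {α : Type} [DecidableEq α] {B s t : Finset (α × α)} {v : α}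
    (hs : ∀ b, (v, b) ∈ B → (v, b) ∈ s) (ht : ∀ a, (a, v) ∈ B → (a, v) ∈ t) :
    deg B v ≤ s.card + t.card :=
  add_le_add (Finset.card_le_card (filter_fst_subset hs))
    (Finset.card_le_card (filter_snd_subset ht))

lemma one_le_deg_fst {α : Type} [DecidableEq α] {B : Finset (α × α)} {v b : α}
    (h : (v, b) ∈ B) : 1 ≤ deg B v := by
  have t1 : 0 < (B.filter fun x => x.1 = v).card :=
    Finset.card_pos.2 ⟨(v, b), Finset.mem_filter.2 ⟨h, rfl⟩⟩
  unfold deg; omega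

lemma one_le_deg_snd {α : Type} [DecidableEq α] {B : Finset (α × α)} {v a : α}
    (h : (a, v) ∈ B) : 1 ≤ deg B v := by
  have t2 : 0 < (B.filter fun x => x.2 = v).card :=
    Finset.card_pos.2 ⟨(a, v), Finset.mem_filter.2 ⟨h, rfl⟩⟩
  unfold deg; omega

lemma two_le_deg {α : Type} [DecidableEq α] {B : Finset (α × α)} {v a b : α}
    (h1 : (v, b) ∈ B) (h2 : (a, v) ∈ B) : 2 ≤ deg B v := by
  have t1 : 0 < (B.filter fun x => x.1 = v).card :=
    Finset.card_pos.2 ⟨(v, b), Finset.mem_filter.2 ⟨h1, rfl⟩⟩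
  have t2 : 0 < (B.filter fun x => x.2 = v).card :=
    Finset.card_pos.2 ⟨(a, v), Finset.mem_filter.2 ⟨h2, rfl⟩⟩
  unfold deg; omega

end MyAux

/-- In the graph `G` constructed from a Set Cover instance with
`q > 2 · (|𝒮| + Σ_{S ∈ 𝒮} |S|)`, let `k ≥ 1`, let `A' ⊆ A` be feasible with
`m' := |{S ∈ 𝒮 | P_S ⊆ A'}|`, and let `𝒞 ⊆ 𝒮` be a set cover of `U` with `|𝒞| < m'`,
with choice function `σ : U → 𝒞` (`u ∈ σ(u)`) and corresponding arc set
`A'' := {(v_u, v^0_{σ(u)}) | u ∈ U} ∪ ⋃_{S ∈ 𝒞} P_S`. Then `obj_k(A'') < obj_k(A')`. -/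
theorem smaller_cover_gives_smaller_obj (Sets : ι → Finset U) (q : ℕ)
    (hq : q > 2 * (Fintype.card ι + ∑ i : ι, (Sets i).card))
    (k : ℕ) (hk : 1 ≤ k)
    (A' : Finset (Vtx U ι q × Vtx U ι q)) (hA' : A' ⊆ arcs Sets q) (hfeas : Feasible A')
    (𝒞 : Finset ι) (hcov : ∀ u : U, ∃ i ∈ 𝒞, u ∈ Sets i)
    (hlt : 𝒞.card < (Finset.univ.filter fun i : ι => Ppath U ι q i ⊆ A').card)
    (σ : U → ι) (hσ𝒞 : ∀ u : U, σ u ∈ 𝒞) (hσ : ∀ u : U, u ∈ Sets (σ u))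
    (A'' : Finset (Vtx U ι q × Vtx U ι q))
    (hA'' : A'' = (Finset.univ.image fun u : U => (Vtx.item u, Vtx.path (σ u) 0)) ∪
      𝒞.biUnion (Ppath U ι q)) :
    obj k A'' < obj k A' := by
  classical
  set M : Finset ι := Finset.univ.filter fun i : ι => Ppath U ι q i ⊆ A' with hM
  obtain ⟨i0, hi0M⟩ : ∃ i, Ppath U ι q i ⊆ A' := by
    obtain ⟨i, hi⟩ := Finset.card_pos.1 (lt_of_le_of_lt (Nat.zero_le _) hlt)
    exact ⟨i, (Finset.mem_filter.1 hi).2⟩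
  have hι : 0 < Fintype.card ι := Fintype.card_pos_iff.2 ⟨i0⟩
  have hq1 : 1 ≤ q := by omega
  set cU : ℕ := Fintype.card U with hcU
  set c : ℕ := 2 ⌈/⌉ k with hc
  set n : ι → ℕ := fun i => (Finset.univ.filter fun u => σ u = i).card with hn
  -- membership characterization of A''
  have hmem : ∀ e : Vtx U ι q × Vtx U ι q, e ∈ A'' ↔
      (∃ u, e = (Vtx.item u, Vtx.path (σ u) 0)) ∨ ∃ i ∈ 𝒞, e ∈ Ppath U ι q i := by
    intro e
    rw [hA'']
    simp only [Finset.mem_union, Finset.mem_image, Finset.mem_biUnion, Finset.mem_univ,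
      true_and]
    constructor
    · rintro (⟨u, hu⟩ | h)
      · exact Or.inl ⟨u, hu.symm⟩
      · exact Or.inr h
    · rintro (⟨u, hu⟩ | h)
      · exact Or.inl ⟨u, hu.symm⟩
      · exact Or.inr h
  -- A'' degree bounds
  have hitem'' : ∀ u : U, deg A'' (Vtx.item u) ≤ 1 := by
    intro u
    have := deg_le_of (B := A'') (v := Vtx.item u)
      (s := {(Vtx.item u, Vtx.path (σ u) 0)}) (t := (∅ : Finset _)) ?_ ?_
    · simpa using this
    · intro b hb
      rw [hmem] at hb
      rcases hb with ⟨u', hu'⟩ | ⟨i, hi, hP⟩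
      · rw [Prod.mk.injEq, Vtx.item.injEq] at hu'
        obtain ⟨rfl, rfl⟩ := hu'
        simp
      · rw [mem_Ppath] at hP
        rcases hP with ⟨j, hj⟩ | hj <;> simp_all
    · intro a ha
      exfalso
      rw [hmem] at ha
      rcases ha with ⟨u', hu'⟩ | ⟨i, hi, hP⟩
      · simp at hu'
      · rw [mem_Ppath] at hP
        rcases hP with ⟨j, hj⟩ | hj <;> simp_all
  have hout : ∀ i, i ∉ 𝒞 → ∀ t : Fin (q + 1), deg A'' (Vtx.path i t) = 0 := by
    intro i hi t
    have := deg_le_of (B := A'') (v := Vtx.path i t)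
      (s := (∅ : Finset _)) (t := (∅ : Finset _)) ?_ ?_
    · simpa using this
    · intro b hb
      exfalso
      rw [hmem] at hb
      rcases hb with ⟨u', hu'⟩ | ⟨i', hi', hP⟩
      · simp at hu'
      · rw [mem_Ppath] at hP
        rcases hP with ⟨j, hj⟩ | hj <;> simp_all
    · intro a ha
      exfalso
      rw [hmem] at ha
      rcases ha with ⟨u', hu'⟩ | ⟨i', hi', hP⟩
      · rw [Prod.mk.injEq, Vtx.path.injEq] at hu'
        obtain ⟨-, h1, -⟩ := hu'
        exact hi (by rw [h1]; exact hσ𝒞 u')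
      · rw [mem_Ppath] at hP
        rcases hP with ⟨j, hj⟩ | hj <;> simp_all
  have hzero : ∀ i, i ∉ 𝒞 → ∀ t : Fin (q + 1), deg A'' (Vtx.path i t) ⌈/⌉ k = 0 := by
    intro i hi t
    rw [hout i hi t]
    simp
  have h0deg : ∀ i ∈ 𝒞, deg A'' (Vtx.path i 0) ≤ 1 + n i := by
    intro i hi
    have := deg_le_of (B := A'') (v := Vtx.path i 0)
      (s := {(Vtx.path i (0 : Fin (q + 1)), Vtx.path i (⟨0, hq1⟩ : Fin q).succ)})
      (t := (Finset.univ.filter fun u => σ u = i).image fun u => (Vtx.item u, Vtx.path i 0))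
      ?_ ?_
    · refine this.trans ?_
      simp only [Finset.card_singleton]
      exact Nat.add_le_add_left (Finset.card_image_le) 1
    · intro b hb
      rw [hmem] at hb
      rcases hb with ⟨u', hu'⟩ | ⟨i', hi', hP⟩
      · simp at hu'
      · rw [mem_Ppath] at hP
        rcases hP with ⟨j, hj⟩ | hj
        · rw [Prod.mk.injEq, Vtx.path.injEq] at hj
          obtain ⟨⟨rfl, hj0⟩, rfl⟩ := hj
          have : j = (⟨0, hq1⟩ : Fin q) := by
            apply Fin.ext
            have := congrArg Fin.val hj0
            simpa using this.symm
          subst this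
          simp
        · rw [Prod.mk.injEq, Vtx.path.injEq] at hj
          obtain ⟨⟨rfl, hj0⟩, -⟩ := hj
          have := congrArg Fin.val hj0
          simp [Fin.last] at this
          omega
    · intro a ha
      rw [hmem] at ha
      rcases ha with ⟨u', hu'⟩ | ⟨i', hi', hP⟩
      · rw [Prod.mk.injEq] at hu'
        obtain ⟨rfl, h2⟩ := hu'
        rw [Vtx.path.injEq] at h2
        obtain ⟨rfl, -⟩ := h2
        exact Finset.mem_image.2 ⟨u', Finset.mem_filter.2 ⟨Finset.mem_univ _, rfl⟩, rfl⟩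
      · exfalso
        rw [mem_Ppath] at hP
        rcases hP with ⟨j, hj⟩ | hj
        · rw [Prod.mk.injEq, Vtx.path.injEq] at hj
          obtain ⟨-, -, hj0⟩ := hj
          exact Fin.succ_ne_zero j hj0.symm
        · rw [Prod.mk.injEq] at hj
          exact absurd hj.2 (by simp)
  have hfstP : ∀ i (t : Fin (q + 1)) (e : Vtx U ι q × Vtx U ι q), e ∈ A'' →
      e.1 = Vtx.path i t → e ∈ Ppath U ι q i := by
    intro i t e he h1
    rw [hmem] at he
    rcases he with ⟨u', hu'⟩ | ⟨i', hi', hP⟩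
    · rw [hu'] at h1
      simp at h1
    · rw [mem_Ppath] at hP
      rcases hP with ⟨j, hj⟩ | hj
      · rw [hj] at h1 ⊢
        rw [Vtx.path.injEq] at h1
        obtain ⟨rfl, -⟩ := h1
        exact mem_Ppath.2 (Or.inl ⟨j, rfl⟩)
      · rw [hj] at h1 ⊢
        rw [Vtx.path.injEq] at h1
        obtain ⟨rfl, -⟩ := h1
        exact mem_Ppath.2 (Or.inr rfl)
  have hsndP : ∀ i (t : Fin (q + 1)), t ≠ 0 → ∀ e : Vtx U ι q × Vtx U ι q, e ∈ A'' →
      e.2 = Vtx.path i t → e ∈ Ppath U ι q i := by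
    intro i t ht e he h2
    rw [hmem] at he
    rcases he with ⟨u', hu'⟩ | ⟨i', hi', hP⟩
    · rw [hu'] at h2
      simp only [Vtx.path.injEq] at h2
      exact absurd h2.2.symm ht
    · rw [mem_Ppath] at hP
      rcases hP with ⟨j, hj⟩ | hj
      · rw [hj] at h2 ⊢
        rw [Vtx.path.injEq] at h2
        obtain ⟨rfl, -⟩ := h2
        exact mem_Ppath.2 (Or.inl ⟨j, rfl⟩)
      · rw [hj] at h2
        simp at h2
  have hsucc'' : ∀ i ∈ 𝒞, ∀ j : Fin q, deg A'' (Vtx.path i j.succ) ≤ 2 := by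
    intro i hi j
    have c1 : (A''.filter fun a => a.1 = Vtx.path i j.succ).card ≤ 1 := by
      apply Finset.card_le_one.2
      intro a ha b hb
      rw [Finset.mem_filter] at ha hb
      exact Ppath_fst_inj (hfstP i j.succ a ha.1 ha.2) (hfstP i j.succ b hb.1 hb.2)
        (ha.2.trans hb.2.symm)
    have c2 : (A''.filter fun a => a.2 = Vtx.path i j.succ).card ≤ 1 := by
      apply Finset.card_le_one.2
      intro a ha b hb
      rw [Finset.mem_filter] at ha hb
      exact Ppath_snd_inj (hsndP i j.succ (Fin.succ_ne_zero j) a ha.1 ha.2)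
        (hsndP i j.succ (Fin.succ_ne_zero j) b hb.1 hb.2) (ha.2.trans hb.2.symm)
    unfold deg
    omega
  have hsink'' : deg A'' Vtx.sink ≤ 𝒞.card := by
    have := deg_le_of (B := A'') (v := Vtx.sink)
      (s := (∅ : Finset _))
      (t := 𝒞.image fun i => (Vtx.path i (Fin.last q), Vtx.sink)) ?_ ?_
    · refine this.trans ?_
      simpa using Finset.card_image_le
    · intro b hb
      exfalso
      rw [hmem] at hb
      rcases hb with ⟨u', hu'⟩ | ⟨i', hi', hP⟩
      · simp at hu'
      · rw [mem_Ppath] at hP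
        rcases hP with ⟨j, hj⟩ | hj <;> simp_all
    · intro a ha
      rw [hmem] at ha
      rcases ha with ⟨u', hu'⟩ | ⟨i', hi', hP⟩
      · simp at hu'
      · rw [mem_Ppath] at hP
        rcases hP with ⟨j, hj⟩ | hj
        · rw [Prod.mk.injEq] at hj
          exact absurd hj.2 (by simp)
        · rw [Prod.mk.injEq] at hj
          obtain ⟨rfl, -⟩ := hj
          exact Finset.mem_image.2 ⟨i', hi', rfl⟩
  -- A' degree lower bounds
  have hitem' : ∀ u : U, 1 ≤ deg A' (Vtx.item u) := by
    intro u
    rcases (hfeas u).cases_head with h | ⟨b, hb, -⟩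
    · exact absurd h (by simp)
    · exact one_le_deg_fst hb
  have hzero0 : (⟨0, hq1⟩ : Fin q).castSucc = (0 : Fin (q + 1)) := by
    apply Fin.ext
    simp
  have h0deg' : ∀ i, Ppath U ι q i ⊆ A' → 1 ≤ deg A' (Vtx.path i 0) := by
    intro i hPi
    have harc : ((Vtx.path i ((⟨0, hq1⟩ : Fin q).castSucc) : Vtx U ι q),
        Vtx.path i (⟨0, hq1⟩ : Fin q).succ) ∈ A' := hPi (mem_Ppath.2 (Or.inl ⟨_, rfl⟩))
    rw [hzero0] at harc
    exact one_le_deg_fst harc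
  have hdeg2 : ∀ i, Ppath U ι q i ⊆ A' → ∀ j : Fin q, 2 ≤ deg A' (Vtx.path i j.succ) := by
    intro i hPi j
    have hin : ((Vtx.path i j.castSucc : Vtx U ι q), Vtx.path i j.succ) ∈ A' :=
      hPi (mem_Ppath.2 (Or.inl ⟨j, rfl⟩))
    by_cases h : (j : ℕ) + 1 < q
    · have hout' : ((Vtx.path i j.succ : Vtx U ι q), Vtx.path i (⟨(j : ℕ) + 1, h⟩ : Fin q).succ)
          ∈ A' := by
        have harc : ((Vtx.path i ((⟨(j : ℕ) + 1, h⟩ : Fin q).castSucc) : Vtx U ι q),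
            Vtx.path i (⟨(j : ℕ) + 1, h⟩ : Fin q).succ) ∈ A' :=
          hPi (mem_Ppath.2 (Or.inl ⟨_, rfl⟩))
        have : (⟨(j : ℕ) + 1, h⟩ : Fin q).castSucc = j.succ := by
          apply Fin.ext
          simp
        rwa [this] at harc
      exact two_le_deg hout' hin
    · have hlast : j.succ = Fin.last q := by
        apply Fin.ext
        have := j.isLt
        simp [Fin.last]
        omega
      have hout' : ((Vtx.path i j.succ : Vtx U ι q), Vtx.sink) ∈ A' := by
        rw [hlast]
        exact hPi (mem_Ppath.2 (Or.inr rfl))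
      exact two_le_deg hout' hin
  have hsink' : 1 ≤ deg A' Vtx.sink :=
    one_le_deg_snd (hi0M (mem_Ppath.2 (Or.inr rfl)))
  -- fiber counting
  have hnU : ∑ i ∈ 𝒞, n i = cU := by
    have := Finset.card_eq_sum_card_fiberwise (f := σ) (s := Finset.univ) (t := 𝒞)
      fun u _ => hσ𝒞 u
    rw [Finset.card_univ] at this
    exact this.symm
  have hU : cU ≤ ∑ i : ι, (Sets i).card := by
    calc cU = ∑ i ∈ 𝒞, n i := hnU.symm
      _ ≤ ∑ i ∈ 𝒞, (Sets i).card := by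
          refine Finset.sum_le_sum fun i hi => Finset.card_le_card fun u hu => ?_
          rw [Finset.mem_filter] at hu
          exact hu.2 ▸ hσ u
      _ ≤ ∑ i : ι, (Sets i).card :=
          Finset.sum_le_sum_of_subset (Finset.subset_univ _)
  -- upper bound on obj k A''
  have hA''sum : obj k A'' ≤ cU + ((𝒞.card + cU + 𝒞.card * (q * c)) + 𝒞.card) := by
    rw [obj, sum_vtx]
    refine add_le_add ?_ (add_le_add ?_ ?_)
    · calc ∑ u : U, deg A'' (Vtx.item u) ⌈/⌉ k ≤ ∑ _u : U, 1 :=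
            Finset.sum_le_sum fun u _ =>
              le_trans (myCeilDiv_mono (hitem'' u)) (myCeilDiv_le_self hk)
        _ = cU := by simp [hcU, Finset.card_univ]
    · have hstep : ∑ i : ι, ∑ t : Fin (q + 1), deg A'' (Vtx.path i t) ⌈/⌉ k =
          ∑ i ∈ 𝒞, ∑ t : Fin (q + 1), deg A'' (Vtx.path i t) ⌈/⌉ k := by
        refine (Finset.sum_subset (Finset.subset_univ 𝒞) fun i _ hi => ?_).symm
        exact Finset.sum_eq_zero fun t _ => hzero i hi t
      rw [hstep]
      calc ∑ i ∈ 𝒞, ∑ t : Fin (q + 1), deg A'' (Vtx.path i t) ⌈/⌉ k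
          ≤ ∑ i ∈ 𝒞, ((1 + n i) + q * c) := by
            refine Finset.sum_le_sum fun i hi => ?_
            rw [Fin.sum_univ_succ]
            refine add_le_add ?_ ?_
            · exact le_trans (myCeilDiv_mono (h0deg i hi)) (myCeilDiv_le_self hk)
            · calc ∑ j : Fin q, deg A'' (Vtx.path i j.succ) ⌈/⌉ k ≤ ∑ _j : Fin q, c :=
                    Finset.sum_le_sum fun j _ => myCeilDiv_mono (hsucc'' i hi j)
                _ = q * c := by simp [mul_comm]
        _ = (𝒞.card + cU + 𝒞.card * (q * c)) := by
            rw [Finset.sum_add_distrib, Finset.sum_add_distrib, hnU, Finset.sum_const,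
              Finset.sum_const]
            simp [mul_comm]
    · exact le_trans (myCeilDiv_mono hsink'') (myCeilDiv_le_self hk)
  -- lower bound on obj k A'
  have hA'sum : cU + (M.card * (1 + q * c) + 1) ≤ obj k A' := by
    rw [obj, sum_vtx]
    refine add_le_add ?_ (add_le_add ?_ ?_)
    · calc cU = ∑ _u : U, 1 := by simp [hcU, Finset.card_univ]
        _ ≤ ∑ u : U, deg A' (Vtx.item u) ⌈/⌉ k :=
            Finset.sum_le_sum fun u _ => my_one_le_ceilDiv hk (hitem' u)
    · calc M.card * (1 + q * c) = ∑ _i ∈ M, (1 + q * c) := by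
            rw [Finset.sum_const]; simp [mul_comm]
        _ ≤ ∑ i ∈ M, ∑ t : Fin (q + 1), deg A' (Vtx.path i t) ⌈/⌉ k := by
            refine Finset.sum_le_sum fun i hi => ?_
            have hPi : Ppath U ι q i ⊆ A' := (Finset.mem_filter.1 hi).2
            rw [Fin.sum_univ_succ]
            refine add_le_add ?_ ?_
            · exact my_one_le_ceilDiv hk (h0deg' i hPi)
            · calc q * c = ∑ _j : Fin q, c := by simp [mul_comm]
                _ ≤ ∑ j : Fin q, deg A' (Vtx.path i j.succ) ⌈/⌉ k :=
                    Finset.sum_le_sum fun j _ => myCeilDiv_mono (hdeg2 i hPi j)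
        _ ≤ ∑ i : ι, ∑ t : Fin (q + 1), deg A' (Vtx.path i t) ⌈/⌉ k :=
            Finset.sum_le_sum_of_subset (Finset.subset_univ M)
    · exact my_one_le_ceilDiv hk hsink'
  -- final arithmetic
  have hc1 : 1 ≤ c := my_one_le_ceilDiv hk (by norm_num)
  have hMc : 𝒞.card + 1 ≤ M.card := hlt
  have h𝒞ι : 𝒞.card ≤ Fintype.card ι := Finset.card_le_univ 𝒞
  have hqX : q ≤ q * c := Nat.le_mul_of_pos_right q hc1
  have key : (𝒞.card + 1) * (1 + q * c) ≤ M.card * (1 + q * c) :=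
    mul_le_mul_left hMc _
  have key' : 𝒞.card + 𝒞.card * (q * c) + 1 + q * c ≤ M.card * (1 + q * c) := by
    calc 𝒞.card + 𝒞.card * (q * c) + 1 + q * c = (𝒞.card + 1) * (1 + q * c) := by ring
      _ ≤ M.card * (1 + q * c) := key
  have hsmall : cU + 𝒞.card < q * c := by omega
  refine lt_of_le_of_lt hA''sum (lt_of_lt_of_le ?_ hA'sum)
  linarith [key', hsmall]
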